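/- Let A = ℤ[X]/⟨X⁶ - 1⟩ with α the class of X, and let σ, τ be the ℤ-algebra endomorphisms determined by σ(α) = α and τ(α) = α². Define a ℤ-linear map D : A → A by D(1) = 0, D(α) = α, and D(α^k) = (∑_{s+t=k-1} σ(α)^s τ(α)^t)·D(α) for k ∈ {1,...,5}. Then D is not a (σ,τ)-derivation. -/
import Mathlib


open Polynomial

/-- The class of X in ℤ[X]/⟨X⁶ - 1⟩. -/
noncomputable def alphaGen : ℤ[X] ⧸ Ideal.span ({X ^ 6 - 1} : Set ℤ[X]) :=
  Ideal.Quotient.mk (Ideal.span ({X ^ 6 - 1} : Set ℤ[X])) X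

/-- Evaluation at 1, descended to the quotient. -/
noncomputable def evOne : (ℤ[X] ⧸ Ideal.span ({X ^ 6 - 1} : Set ℤ[X])) →ₐ[ℤ] ℤ :=
  Ideal.Quotient.liftₐ _ (aeval (1 : ℤ)) (by
    intro a ha
    rw [Ideal.mem_span_singleton] at ha
    obtain ⟨c, rfl⟩ := ha
    simp)

lemma evOne_alpha : evOne alphaGen = 1 := by
  simp [evOne, alphaGen]

/-- In A = ℤ[X]/⟨X⁶ - 1⟩, with σ(α) = α, τ(α) = α², the
ℤ-linear map D with D(1) = 0, D(α) = α and
D(α^k) = (∑_{s+t=k-1} σ(α)^s τ(α)^t)·D(α) for k ∈ {1,...,5}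
is not a (σ,τ)-derivation. -/
theorem not_sigma_tau_derivation_example
    (σ τ : (ℤ[X] ⧸ Ideal.span ({X ^ 6 - 1} : Set ℤ[X])) →ₐ[ℤ]
           (ℤ[X] ⧸ Ideal.span ({X ^ 6 - 1} : Set ℤ[X])))
    (hσ : σ alphaGen = alphaGen) (hτ : τ alphaGen = alphaGen ^ 2)
    (D : (ℤ[X] ⧸ Ideal.span ({X ^ 6 - 1} : Set ℤ[X])) →ₗ[ℤ]
         (ℤ[X] ⧸ Ideal.span ({X ^ 6 - 1} : Set ℤ[X])))
    (hD1 : D 1 = 0) (hDα : D alphaGen = alphaGen)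
    (hDk : ∀ k ∈ Finset.Icc 1 5,
      D (alphaGen ^ k) =
        (∑ s ∈ Finset.range k, (σ alphaGen) ^ s * (τ alphaGen) ^ (k - 1 - s)) *
          D alphaGen) :
    ¬ (∀ x y, D (x * y) = D x * τ y + σ x * D y) := by
  intro h
  have h6 : alphaGen ^ 6 = 1 := by
    have hz : (Ideal.Quotient.mk (Ideal.span ({X ^ 6 - 1} : Set ℤ[X])))
        (X ^ 6 - 1) = 0 :=
      Ideal.Quotient.eq_zero_iff_mem.2 (Ideal.subset_span rfl)
    have h0 : alphaGen ^ 6 - 1 = 0 := by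
      unfold alphaGen
      rw [← map_pow, ← map_one (Ideal.Quotient.mk (Ideal.span ({X ^ 6 - 1} : Set ℤ[X]))), ← map_sub]
      exact hz
    exact sub_eq_zero.mp h0
  have key := h (alphaGen ^ 5) alphaGen
  rw [show alphaGen ^ 5 * alphaGen = alphaGen ^ 6 by ring, h6, hD1,
    hDk 5 (by decide), map_pow, hσ, hτ, hDα] at key
  have := congrArg evOne key
  simp [Finset.sum_range_succ, evOne_alpha] at this
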